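/- Let K be a field complete with respect to a nonarchimedean absolute value whose value group |K^×| is dense in ℝ_{>0}. Let (U, ‖·‖) be a seminormed K-vector space, let S ⊆ U be a finite subset with n := card(S) ≥ 1, and let V be the K-linear span of S. Then there exists a decomposable norm v on V such that: (1) ‖x‖ ≤ v(x) for every x ∈ V; (2) for every x ∈ S, v(x) ≤ ((n+1)/n)·‖x‖ if ‖x‖ ≠ 0, and v(x) ≤ 1/(n+1) if ‖x‖ = 0. -/

import Mathlib

noncomputable section

/-- A nonarchimedean seminorm on a `K`-vector space. -/
def IsNASeminorm (K : Type*) [NormedField K] {U : Type*} [AddCommGroup U] [Module K U]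
    (p : U → ℝ) : Prop :=
  (∀ x, 0 ≤ p x) ∧ (∀ (a : K) (x : U), p (a • x) = ‖a‖ * p x) ∧
    ∀ x y, p (x + y) ≤ max (p x) (p y)

/-- A decomposable norm on a finite-dimensional `K`-vector space: there exist a basis
`(e 1, …, e d)` and positive reals `r 1, …, r d` such that
`v (∑ᵢ λᵢ • eᵢ) = maxᵢ (‖λᵢ‖ · rᵢ)`. -/
def IsDecomposableNorm (K : Type*) [NormedField K] {W : Type*} [AddCommGroup W] [Module K W]
    (v : W → ℝ) : Prop :=
  ∃ (d : ℕ) (b : Module.Basis (Fin d) K W) (r : Fin d → ℝ),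
    (∀ i, 0 < r i) ∧ ∀ y : W, v y = ⨆ i, ‖b.repr y i‖ * r i

lemma IsNASeminorm.zero {K : Type*} [NormedField K] {U : Type*} [AddCommGroup U] [Module K U]
    {p : U → ℝ} (hp : IsNASeminorm K p) : p 0 = 0 := by
  have := hp.2.1 (0 : K) 0
  simpa using this

lemma IsNASeminorm.sum_le {K : Type*} [NormedField K] {U : Type*} [AddCommGroup U] [Module K U]
    {p : U → ℝ} (hp : IsNASeminorm K p) {ι : Type*} (s : Finset ι) (f : ι → U) {B : ℝ}
    (hB : 0 ≤ B) (h : ∀ i ∈ s, p (f i) ≤ B) : p (∑ i ∈ s, f i) ≤ B := by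
  classical
  induction s using Finset.cons_induction with
  | empty => simpa [hp.zero] using hB
  | cons a s ha ih =>
      rw [Finset.sum_cons]
      refine le_trans (hp.2.2 _ _) (max_le (h a (Finset.mem_cons_self a s)) ?_)
      exact ih fun i hi => h i (Finset.mem_cons_of_mem hi)

set_option maxHeartbeats 4000000 in
/-- **Approximation by decomposable norms on the span of a finite set**
(key step in Proposition `prop:limitofdecomposables`).
Let `K` be a complete nonarchimedean valued field whose value group is dense in `ℝ_{>0}`,
`(U, p)` a seminormed `K`-vector space, `S ⊆ U` a finite nonempty subset of cardinality `n`,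
and `V` the span of `S`.  Then there is a decomposable norm `v` on `V` with `p ≤ v` on `V`,
`v x ≤ ((n+1)/n) · p x` for every `x ∈ S` with `p x ≠ 0`, and `v x ≤ 1/(n+1)` for every
`x ∈ S` with `p x = 0`. -/
theorem exists_decomposable_norm_on_span
    {K : Type*} [DenselyNormedField K] [IsUltrametricDist K] [CompleteSpace K]
    {U : Type*} [AddCommGroup U] [Module K U]
    (p : U → ℝ) (hp : IsNASeminorm K p)
    (S : Finset U) (hS : S.Nonempty) :
    ∃ v : ↥(Submodule.span K (S : Set U)) → ℝ,
      IsDecomposableNorm K v ∧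
      (∀ y : ↥(Submodule.span K (S : Set U)), p ↑y ≤ v y) ∧
      (∀ x, ∀ hx : x ∈ S,
        (p x ≠ 0 →
          v ⟨x, Submodule.subset_span hx⟩ ≤ ((S.card : ℝ) + 1) / (S.card : ℝ) * p x) ∧
        (p x = 0 →
          v ⟨x, Submodule.subset_span hx⟩ ≤ 1 / ((S.card : ℝ) + 1))) := by
  classical
  set V := Submodule.span K (S : Set U) with hVdef
  haveI : FiniteDimensional K V := FiniteDimensional.span_of_finite K S.finite_toSet
  set n := S.card with hn
  have hn1 : (1 : ℝ) ≤ (n : ℝ) := by exact_mod_cast hS.card_pos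
  have hn0 : (0 : ℝ) < (n : ℝ) := lt_of_lt_of_le one_pos hn1
  -- choose scalars
  have hcex : ∀ x : U, ∃ c : K, c ≠ 0 ∧
      (p x ≠ 0 → 1 < ‖c‖ * p x ∧ ‖c‖ * p x < 1 + 1 / n) ∧
      (p x = 0 → ((n : ℝ) + 1) ^ 2 < ‖c‖) := by
    intro x
    by_cases hx : p x = 0
    · obtain ⟨c, hc1, hc2⟩ := NormedField.exists_lt_norm_lt K
        (by positivity : (0:ℝ) ≤ ((n:ℝ)+1)^2) (lt_add_one _)
      refine ⟨c, ?_, fun h => absurd hx h, fun _ => hc1⟩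
      intro h; rw [h] at hc1; simp at hc1; nlinarith
    · have hpx : 0 < p x := lt_of_le_of_ne (hp.1 x) (Ne.symm hx)
      obtain ⟨c, hc1, hc2⟩ := NormedField.exists_lt_norm_lt K
        (by positivity : (0:ℝ) ≤ (p x)⁻¹)
        (by rw [inv_eq_one_div, div_lt_div_iff₀ hpx hpx]
            have h1n : (0:ℝ) < 1 / n := by positivity
            nlinarith : (p x)⁻¹ < (1 + 1/n) / p x)
      refine ⟨c, ?_, fun _ => ⟨?_, ?_⟩, fun h => absurd h hx⟩
      · intro h; rw [h, norm_zero] at hc1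
        exact absurd hc1 (not_lt.2 (by positivity))
      · have := (inv_lt_iff_one_lt_mul₀ hpx).mp hc1
        linarith [this]
      · calc ‖c‖ * p x < ((1 + 1/n) / p x) * p x := by
              exact mul_lt_mul_of_pos_right hc2 hpx
          _ = 1 + 1/n := by field_simp
  choose c hc0 hcp hcz using hcex
  -- the scaled family
  set inc : {x // x ∈ S} → V := fun x => ⟨x.1, Submodule.subset_span x.2⟩ with hinc
  set F : {x // x ∈ S} → V := fun x => c x.1 • inc x with hF
  have hFspan : Submodule.span K (Set.range F) = ⊤ := by
    rw [eq_top_iff]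
    rw [← Submodule.span_span_coe_preimage (R := K) (s := (S : Set U))]
    refine Submodule.span_le.2 ?_
    rintro y hy
    have hyS : (y : U) ∈ S := hy
    have : y = (c (y:U))⁻¹ • F ⟨y, hyS⟩ := by
      rw [hF]; simp only []
      rw [smul_smul, inv_mul_cancel₀ (hc0 (y:U)), one_smul]
    rw [this]
    exact Submodule.smul_mem _ _ (Submodule.subset_span ⟨⟨y, hyS⟩, rfl⟩)
  -- reference data
  set d := Module.finrank K V with hd
  set b0 := Module.finBasis K V with hb0
  -- a tuple with nonzero determinant exists
  obtain ⟨t, htsub, htspan, htli⟩ := exists_linearIndependent K (Set.range F)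
  rw [hFspan] at htspan
  have htfin : t.Finite := (Set.finite_range F).subset htsub
  haveI := htfin.fintype
  set bt : Module.Basis t K V := Module.Basis.mk htli (by rw [Subtype.range_coe]; exact htspan.ge) with hbt
  have hcard : Fintype.card t = d := by
    rw [hd]; exact (Module.finrank_eq_card_basis bt).symm
  set e : Fin d ≃ t := (Fintype.equivFinOfCardEq hcard).symm with he
  have hg0 : ∀ i : Fin d, ∃ s : {x // x ∈ S}, F s = ((e i : V)) := fun i => htsub (e i).2
  choose g0 hg0spec using hg0
  have hdet0 : b0.det (F ∘ g0) ≠ 0 := by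
    have hb1 : ⇑(bt.reindex e.symm) = F ∘ g0 := by
      funext i
      rw [Module.Basis.coe_reindex]
      simp only [Function.comp_apply, Equiv.symm_symm, hbt, Module.Basis.coe_mk]
      exact (hg0spec i).symm
    have hu := b0.isUnit_det (bt.reindex e.symm)
    rw [hb1] at hu
    exact hu.ne_zero
  haveI : Nonempty {x // x ∈ S} := ⟨⟨hS.choose, hS.choose_spec⟩⟩
  obtain ⟨g, hgmax⟩ := Finite.exists_max (fun g : Fin d → {x // x ∈ S} => ‖b0.det (F ∘ g)‖)
  have hDg : b0.det (F ∘ g) ≠ 0 := by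
    intro h
    have h2 := hgmax g0
    simp only [h, norm_zero] at h2
    exact hdet0 (norm_eq_zero.mp (le_antisymm h2 (norm_nonneg _)))
  obtain ⟨hli, hsp⟩ := (Module.Basis.is_basis_iff_det b0).2 (isUnit_iff_ne_zero.2 hDg)
  set b : Module.Basis (Fin d) K V := Module.Basis.mk hli hsp.ge with hbdef
  have hbco : ∀ i, b i = F (g i) := fun i => by rw [hbdef, Module.Basis.coe_mk]; rfl
  -- Cramer bound
  have key : ∀ (x : {x // x ∈ S}) (i : Fin d), ‖b.repr (F x) i‖ ≤ 1 := by
    intro x i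
    have h1 := Module.Basis.det_smul_mk_coord_eq_det_update (e := b0) hli hsp.ge i
    have h2 := LinearMap.congr_fun h1 (F x)
    simp only [LinearMap.smul_apply, MultilinearMap.toLinearMap_apply, smul_eq_mul,
      Module.Basis.coord_apply] at h2
    have h3 : ‖b0.det (F ∘ g)‖ * ‖b.repr (F x) i‖ = ‖b0.det (F ∘ Function.update g i x)‖ := by
      rw [← norm_mul]
      congr 1
      rw [Function.comp_update]
      exact h2
    have h4 := hgmax (Function.update g i x)
    rw [← h3] at h4
    have hpos : 0 < ‖b0.det (F ∘ g)‖ := norm_pos_iff.mpr hDg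
    exact (mul_le_iff_le_one_right hpos).mp (by linarith [h4]) |>.trans le_rfl
  -- the weights
  set r : Fin d → ℝ := fun i => if p ((b i : V) : U) = 0 then 1 else p ((b i : V) : U) with hr
  have hrpos : ∀ i, 0 < r i := by
    intro i; rw [hr]
    by_cases h : p ((b i : V) : U) = 0
    · simp [h]
    · simp only [h, if_false]
      exact lt_of_le_of_ne (hp.1 _) (Ne.symm h)
  have hrge : ∀ i, p ((b i : V) : U) ≤ r i := by
    intro i; rw [hr]
    by_cases h : p ((b i : V) : U) = 0
    · simp [h]
    · simp [h]
  have hpF : ∀ x : {x // x ∈ S}, p ((F x : V) : U) = ‖c x.1‖ * p x.1 := by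
    intro x
    have h : ((F x : V) : U) = c x.1 • (x.1 : U) := rfl
    rw [h, hp.2.1]
  have hrle : ∀ i, r i ≤ 1 + 1 / n := by
    intro i
    rw [hr]
    have hco : ((b i : V) : U) = ((F (g i) : V) : U) := by rw [hbco i]
    by_cases h : p ((b i : V) : U) = 0
    · simp only [h, if_true]
      have h1n : (0:ℝ) < 1 / n := by positivity
      linarith
    · simp only [h, if_false]
      rw [hco, hpF]
      have hpx : p ((g i).1 : U) ≠ 0 := by
        intro h0
        apply h
        rw [hco, hpF, h0, mul_zero]
      exact le_of_lt (hcp _ hpx).2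
  -- the norm
  set v : V → ℝ := fun y => ⨆ i, ‖b.repr y i‖ * r i with hv
  have hvnonneg : ∀ y, 0 ≤ v y :=
    fun y => Real.iSup_nonneg fun i => mul_nonneg (norm_nonneg _) (hrpos i).le
  have hple : ∀ y : V, p ↑y ≤ v y := by
    intro y
    have hy : (y : U) = ∑ i, b.repr y i • ((b i : V) : U) := by
      conv_lhs => rw [← b.sum_repr y]
      push_cast
      rfl
    rw [hy]
    refine hp.sum_le _ _ (hvnonneg y) ?_
    intro i _
    rw [hp.2.1]
    calc ‖b.repr y i‖ * p ((b i : V) : U) ≤ ‖b.repr y i‖ * r i :=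
          mul_le_mul_of_nonneg_left (hrge i) (norm_nonneg _)
      _ ≤ v y :=
          le_ciSup (f := fun j => ‖b.repr y j‖ * r j)
            (Set.Finite.bddAbove (Set.finite_range _)) i
  -- coordinate bound for elements of S
  have hbound : ∀ (x : U) (hx : x ∈ S) (i : Fin d),
      ‖b.repr ⟨x, Submodule.subset_span hx⟩ i‖ * r i ≤ ‖c x‖⁻¹ * (1 + 1 / n) := by
    intro x hx i
    have hxV : (⟨x, Submodule.subset_span hx⟩ : V) = (c x)⁻¹ • F ⟨x, hx⟩ := by
      rw [hF]
      simp only []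
      rw [smul_smul, inv_mul_cancel₀ (hc0 x), one_smul]
    rw [hxV, map_smul, Finsupp.smul_apply, smul_eq_mul, norm_mul, norm_inv]
    calc ‖c x‖⁻¹ * ‖b.repr (F ⟨x, hx⟩) i‖ * r i
        ≤ ‖c x‖⁻¹ * 1 * (1 + 1 / n) := by
          have h0 : (0:ℝ) ≤ ‖c x‖⁻¹ := by positivity
          exact mul_le_mul (mul_le_mul_of_nonneg_left (key ⟨x, hx⟩ i) h0)
            (hrle i) (hrpos i).le (by positivity)
      _ = ‖c x‖⁻¹ * (1 + 1 / n) := by ring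
  refine ⟨v, ⟨d, b, r, hrpos, fun y => rfl⟩, hple, ?_⟩
  intro x hx
  have hcpos : 0 < ‖c x‖ := norm_pos_iff.mpr (hc0 x)
  constructor
  · intro hpx
    have hpxpos : 0 < p x := lt_of_le_of_ne (hp.1 x) (Ne.symm hpx)
    refine Real.iSup_le (fun i => le_trans (hbound x hx i) ?_) (by positivity)
    have h1 : ‖c x‖⁻¹ ≤ p x := by
      have h2 := (hcp x hpx).1
      rw [inv_eq_one_div, div_le_iff₀ hcpos]
      nlinarith
    have heq : ((n:ℝ) + 1) / n = 1 + 1 / n := by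
      rw [add_div, div_self (ne_of_gt hn0)]
    rw [heq]
    have h1npos : (0:ℝ) < 1 + 1 / n := by positivity
    calc ‖c x‖⁻¹ * (1 + 1/n) ≤ p x * (1 + 1/n) := by gcongr
      _ = (1 + 1/n) * p x := by ring
  · intro hpx
    refine Real.iSup_le (fun i => le_trans (hbound x hx i) ?_) (by positivity)
    have h2 : (1 + 1/(n:ℝ)) * ((n:ℝ) + 1) ≤ ‖c x‖ := by
      have h3 := hcz x hpx
      have h1n : 1 / (n:ℝ) ≤ 1 := by rw [div_le_one hn0]; exact hn1
      nlinarith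
    rw [inv_mul_le_iff₀ hcpos, mul_one_div,
      le_div_iff₀ (by positivity : (0:ℝ) < (n:ℝ) + 1)]
    exact h2

end
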